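/- Let r(x) = (1+x²)^σ with σ > 0. Then κ = sup_{x ∈ ℝ} ∫_ℝ (r(x)/r(y)) e^{-|x-y|} dy is finite. -/

import Mathlib

open MeasureTheory Filter Asymptotics Real

lemma h_integrable (σ : ℝ) (hσ : 0 < σ) :
    Integrable (fun u : ℝ => (1 + u ^ 2) ^ σ * Real.exp (-|u|)) := by
  have hcont : Continuous (fun u : ℝ => (1 + u ^ 2) ^ σ * Real.exp (-|u|)) := by
    apply Continuous.mul
    · exact (continuous_const.add (continuous_pow 2)).rpow_const
        (fun x => Or.inr hσ.le)
    · exact Real.continuous_exp.comp (continuous_abs.neg)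
  have hO : (fun u : ℝ => (1 + u ^ 2) ^ σ * Real.exp (-|u|)) =O[atTop]
      fun u : ℝ => Real.exp (-(1/2) * u) := by
    have t : Tendsto (fun u : ℝ => (1 + u ^ 2) ^ σ * Real.exp (-(1/2) * u)) atTop (nhds 0) := by
      have t2 : Tendsto (fun u : ℝ => u ^ (2 * σ) * Real.exp (-(1/4) * u)) atTop (nhds 0) :=
        tendsto_rpow_mul_exp_neg_mul_atTop_nhds_zero (2 * σ) (1/4) (by norm_num)
      have t3 : Tendsto (fun u : ℝ =>
          (2 : ℝ) ^ σ * (u ^ (2 * σ) * Real.exp (-(1/4) * u)) * Real.exp (-(1/4) * u))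
          atTop (nhds 0) := by
        have := ((t2.const_mul ((2:ℝ) ^ σ)).mul
          (Real.tendsto_exp_atBot.comp (tendsto_id.const_mul_atTop_of_neg (show (-(1/4):ℝ) < 0 by norm_num))))
        simpa using this
      refine squeeze_zero_norm' ?_ t3
      filter_upwards [eventually_ge_atTop (1 : ℝ)] with u hu
      have hu0 : (0:ℝ) < u := lt_of_lt_of_le one_pos hu
      have h1 : (1 + u ^ 2 : ℝ) ≤ 2 * u ^ 2 := by nlinarith
      have h2 : (1 + u ^ 2 : ℝ) ^ σ ≤ (2 * u ^ 2) ^ σ :=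
        Real.rpow_le_rpow (by positivity) h1 hσ.le
      have h3 : ((2:ℝ) * u ^ 2) ^ σ = 2 ^ σ * u ^ (2 * σ) := by
        rw [Real.mul_rpow (by norm_num) (by positivity), ← Real.rpow_natCast u 2,
          ← Real.rpow_mul hu0.le]
        norm_num [mul_comm]
      have h4 : Real.exp (-(1/2) * u) = Real.exp (-(1/4) * u) * Real.exp (-(1/4) * u) := by
        rw [← Real.exp_add]; ring_nf
      rw [Real.norm_eq_abs, abs_of_nonneg (by positivity)]
      calc (1 + u ^ 2) ^ σ * Real.exp (-(1/2) * u)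
          ≤ (2 ^ σ * u ^ (2 * σ)) * Real.exp (-(1/2) * u) := by
            apply mul_le_mul_of_nonneg_right _ (Real.exp_pos _).le
            rw [← h3]; exact h2
        _ = 2 ^ σ * (u ^ (2 * σ) * Real.exp (-(1/4) * u)) * Real.exp (-(1/4) * u) := by
            rw [h4]; ring
    refine IsBigO.of_bound 1 ?_
    filter_upwards [eventually_ge_atTop (0 : ℝ),
      t.eventually (eventually_le_nhds (show (0:ℝ) < 1 by norm_num))] with u hu ht
    have habs : |u| = u := abs_of_nonneg hu
    have h5 : Real.exp (-u) = Real.exp (-(1/2) * u) * Real.exp (-(1/2) * u) := by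
      rw [← Real.exp_add]; ring_nf
    rw [Real.norm_eq_abs, Real.norm_eq_abs, abs_of_nonneg (by positivity),
      abs_of_nonneg (Real.exp_pos _).le, habs, h5, ← mul_assoc]
    exact mul_le_mul_of_nonneg_right ht (Real.exp_pos _).le
  refine (hcont.locallyIntegrable).integrable_of_isBigO_atTop_of_norm_isNegInvariant
    ?_ hO ⟨Set.Ici 0, Ici_mem_atTop 0, ?_⟩
  · refine Filter.Eventually.of_forall fun u => ?_
    simp [Function.comp, abs_neg]
  · exact Iff.mpr integrableOn_Ici_iff_integrableOn_Ioi
      (exp_neg_integrableOn_Ioi 0 (by norm_num : (0:ℝ) < 1/2))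

theorem kappa_poly_weight (σ : ℝ) (hσ : 0 < σ) :
    ∃ K : ℝ, ∀ x : ℝ,
      (∫ y : ℝ, ((1 + x ^ 2) ^ σ / (1 + y ^ 2) ^ σ) * Real.exp (-|x - y|)) ≤ K := by
  set h : ℝ → ℝ := fun u => (1 + u ^ 2) ^ σ * Real.exp (-|u|) with hh
  have hint := h_integrable σ hσ
  refine ⟨2 ^ σ * ∫ u, h u, fun x => ?_⟩
  have key : ∀ y : ℝ, ((1 + x ^ 2) ^ σ / (1 + y ^ 2) ^ σ) * Real.exp (-|x - y|) ≤
      2 ^ σ * h (x - y) := by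
    intro y
    have hbase : (1 + x ^ 2) / (1 + y ^ 2) ≤ 2 * (1 + (x - y) ^ 2) := by
      rw [div_le_iff₀ (by positivity)]
      nlinarith [sq_nonneg (x - 2 * y), sq_nonneg ((x - y) * y)]
    have h1 : (1 + x ^ 2) ^ σ / (1 + y ^ 2) ^ σ ≤ 2 ^ σ * (1 + (x - y) ^ 2) ^ σ := by
      rw [← Real.div_rpow (by positivity) (by positivity),
        ← Real.mul_rpow (by norm_num) (by positivity)]
      exact Real.rpow_le_rpow (by positivity) hbase hσ.le
    calc ((1 + x ^ 2) ^ σ / (1 + y ^ 2) ^ σ) * Real.exp (-|x - y|)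
        ≤ (2 ^ σ * (1 + (x - y) ^ 2) ^ σ) * Real.exp (-|x - y|) :=
          mul_le_mul_of_nonneg_right h1 (Real.exp_pos _).le
      _ = 2 ^ σ * h (x - y) := by rw [hh]; ring
  have hg : Integrable (fun y : ℝ => 2 ^ σ * h (x - y)) :=
    (hint.comp_sub_left x).const_mul _
  calc (∫ y : ℝ, ((1 + x ^ 2) ^ σ / (1 + y ^ 2) ^ σ) * Real.exp (-|x - y|))
      ≤ ∫ y : ℝ, 2 ^ σ * h (x - y) := by
        refine integral_mono_of_nonneg ?_ hg (Filter.Eventually.of_forall key)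
        refine Filter.Eventually.of_forall fun y => ?_
        positivity
    _ = 2 ^ σ * ∫ y : ℝ, h (x - y) := MeasureTheory.integral_const_mul _ _
    _ = 2 ^ σ * ∫ u, h u := by rw [integral_sub_left_eq_self h volume x]
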